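/- Consider the linearly parameterized error dynamics ṡ = −η s + Y(t)(â − a) with η > 0, and let ψ : ℝᵖ → ℝ be a twice continuously differentiable l-strongly convex function (∇²ψ(·) ⪰ l I globally, l > 0). Consider the natural momentum adaptation law v̂̇ = −γ [∇²ψ(v̂)]⁻¹ Y(t)ᵀ s, â̇ = β 𝒩(t)(v̂ − â), with 𝒩(t) = 1 + μ‖Y(t)‖², γ, β > 0, and μ > γ(1 + l⁻¹)²/(4βη). Then all trajectories (x, v̂, â) remain bounded, s ∈ L² ∩ L∞, s(t) → 0 as t → ∞, and x(t) → x_d(t). -/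

import Mathlib

open MeasureTheory Filter
open scoped RealInnerProductSpace ENNReal

noncomputable section

/-- The signal `g` is square-integrable (`L²`) on `[0, ∞)`. -/
def InL2 {F : Type*} [NormedAddCommGroup F] (g : ℝ → F) : Prop :=
  ∫⁻ t in Set.Ici (0 : ℝ), ENNReal.ofReal (‖g t‖ ^ 2) < ⊤

/-- The signal `g` is bounded (`L∞`) on `[0, ∞)`. -/
def InLinf {F : Type*} [NormedAddCommGroup F] (g : ℝ → F) : Prop :=
  ∃ C : ℝ, ∀ t : ℝ, 0 ≤ t → ‖g t‖ ≤ C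

set_option maxHeartbeats 1000000

open Set in
lemma my_barbalat {f : ℝ → ℝ} {L C : ℝ}
    (hcont : ∀ t : ℝ, 0 ≤ t → ContinuousAt f t)
    (hlip : ∀ t u : ℝ, 0 ≤ t → 0 ≤ u → |f t - f u| ≤ L * |t - u|)
    (hint : ∀ T : ℝ, 0 ≤ T → (∫ u in (0:ℝ)..T, f u ^ 2) ≤ C) :
    Tendsto f atTop (nhds 0) := by
  set L' : ℝ := |L| + 1 with hL'
  have hL'pos : 0 < L' := by positivity
  have hlip' : ∀ t u : ℝ, 0 ≤ t → 0 ≤ u → |f t - f u| ≤ L' * |t - u| := by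
    intro t u ht hu
    refine (hlip t u ht hu).trans (mul_le_mul_of_nonneg_right ?_ (abs_nonneg _))
    calc L ≤ |L| := le_abs_self L
    _ ≤ L' := by simp [hL']
  have hContOn : ContinuousOn (fun u => f u ^ 2) (Ici (0:ℝ)) := fun t ht =>
    (((hcont t ht).pow 2).continuousWithinAt)
  have hII : ∀ t₁ t₂ : ℝ, 0 ≤ t₁ → 0 ≤ t₂ →
      IntervalIntegrable (fun u => f u ^ 2) volume t₁ t₂ := by
    intro t₁ t₂ h1 h2
    refine (hContOn.mono ?_).intervalIntegrable
    exact fun z hz => le_trans (le_min h1 h2) hz.1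
  set F : ℝ → ℝ := fun T => ∫ u in (0:ℝ)..T, f u ^ 2 with hF
  have hFmono : ∀ t₁ t₂ : ℝ, 0 ≤ t₁ → t₁ ≤ t₂ → F t₁ ≤ F t₂ := by
    intro t₁ t₂ h1 h12
    have hadd := intervalIntegral.integral_add_adjacent_intervals (hII 0 t₁ le_rfl h1)
      (hII t₁ t₂ h1 (h1.trans h12))
    have hnn : 0 ≤ ∫ u in t₁..t₂, f u ^ 2 :=
      intervalIntegral.integral_nonneg h12 (fun u _ => sq_nonneg _)
    simp only [hF]
    rw [← hadd]
    linarith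
  by_contra hnot
  rw [Metric.tendsto_atTop] at hnot
  push_neg at hnot
  obtain ⟨ε, hε, hbad⟩ := hnot
  set δ : ℝ := ε / (2 * L') with hδdef
  have hδ : 0 < δ := by positivity
  set c0 : ℝ := δ * (ε ^ 2 / 4) with hc0def
  have hc0 : 0 < c0 := by positivity
  -- each bad point gives a block of integral at least c0
  have hblock : ∀ t : ℝ, 0 ≤ t → ε ≤ |f t| → c0 ≤ ∫ u in t..(t + δ), f u ^ 2 := by
    intro t ht hft
    have hmono := intervalIntegral.integral_mono_on (f := fun _ : ℝ => ε ^ 2 / 4)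
      (g := fun u => f u ^ 2) (by linarith : t ≤ t + δ)
      (intervalIntegrable_const) (hII t (t + δ) ht (by linarith)) ?_
    · calc c0 = (ε ^ 2 / 4) * δ := by ring
      _ = ∫ _ in t..(t + δ), (ε^2/4 : ℝ) := by
          rw [intervalIntegral.integral_const]; simp [smul_eq_mul]; ring
      _ ≤ _ := hmono
    · intro u hu
      rcases hu with ⟨hu1, hu2⟩
      have hu0 : 0 ≤ u := ht.trans hu1
      have hclose : |f t - f u| ≤ ε / 2 := by
        have := hlip' t u ht hu0
        have habs : |t - u| ≤ δ := by rw [abs_le]; constructor <;> linarith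
        calc |f t - f u| ≤ L' * |t - u| := this
        _ ≤ L' * δ := by nlinarith
        _ = ε / 2 := by rw [hδdef]; field_simp
      have hfu : ε / 2 ≤ |f u| := by
        have h1 : |f t| - |f u| ≤ |f t - f u| := abs_sub_abs_le_abs_sub _ _
        linarith
      calc ε ^ 2 / 4 = (ε / 2) ^ 2 := by ring
      _ ≤ |f u| ^ 2 := by nlinarith [abs_nonneg (f u)]
      _ = f u ^ 2 := sq_abs _
  -- inductively accumulate n blocks
  have hclaim : ∀ n : ℕ, ∃ t : ℝ, 0 ≤ t ∧ (n : ℝ) * c0 ≤ F t := by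
    intro n
    induction n with
    | zero => exact ⟨0, le_rfl, by simp [hF]⟩
    | succ n ih =>
      obtain ⟨t, ht0, hFt⟩ := ih
      obtain ⟨t', ht', hbadt'⟩ := hbad (max t 0)
      have ht'0 : 0 ≤ t' := le_trans (le_max_right _ _) ht'
      have ht't : t ≤ t' := le_trans (le_max_left _ _) ht'
      refine ⟨t' + δ, by linarith, ?_⟩
      have hdist : ε ≤ |f t'| := by simpa [Real.dist_eq] using hbadt'
      have hFsplit : F (t' + δ) = F t' + ∫ u in t'..(t' + δ), f u ^ 2 := by
        simp only [hF]
        rw [← intervalIntegral.integral_add_adjacent_intervals (hII 0 t' le_rfl ht'0)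
          (hII t' (t' + δ) ht'0 (by linarith))]
      have hFmono' : F t ≤ F t' := hFmono t t' ht0 ht't
      have hb := hblock t' ht'0 hdist
      push_cast
      rw [hFsplit]
      linarith
  obtain ⟨n, hn⟩ := exists_nat_gt (C / c0)
  obtain ⟨t, ht0, hFt⟩ := hclaim n
  have : C < (n : ℝ) * c0 := by
    rw [div_lt_iff₀ hc0] at hn; linarith
  have := hint t ht0
  simp only [hF] at hFt
  linarith


open Set in
lemma my_bregman_ge {p : ℕ} {ψ : EuclideanSpace ℝ (Fin p) → ℝ}
    {gradψ : EuclideanSpace ℝ (Fin p) → EuclideanSpace ℝ (Fin p)}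
    {hessψ : EuclideanSpace ℝ (Fin p) →
      (EuclideanSpace ℝ (Fin p) →L[ℝ] EuclideanSpace ℝ (Fin p))}
    {l : ℝ}
    (hgrad : ∀ θ, HasGradientAt ψ (gradψ θ) θ)
    (hhess : ∀ θ, HasFDerivAt gradψ (hessψ θ) θ)
    (hstrong : ∀ θ v : EuclideanSpace ℝ (Fin p), l * ‖v‖ ^ 2 ≤ ⟪v, hessψ θ v⟫)
    (y θ : EuclideanSpace ℝ (Fin p)) :
    l / 2 * ‖y - θ‖ ^ 2 ≤ ψ y - ψ θ - ⟪gradψ θ, y - θ⟫ := by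
  set u := y - θ with hu
  have hc : ∀ r : ℝ, HasDerivAt (fun r : ℝ => θ + r • u) u r := by
    intro r
    simpa using ((hasDerivAt_id r).smul_const u).const_add θ
  have hψ' : ∀ r : ℝ, HasDerivAt (fun r : ℝ => ψ (θ + r • u)) ⟪gradψ (θ + r • u), u⟫ r := by
    intro r
    have h := (hgrad (θ + r • u)).hasFDerivAt.comp_hasDerivAt r (hc r); simp at h; exact h
  have hg' : ∀ r : ℝ, HasDerivAt (fun r : ℝ => gradψ (θ + r • u)) (hessψ (θ + r • u) u) r := by
    intro r
    exact (hhess (θ + r • u)).comp_hasDerivAt r (hc r)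
  set φ' : ℝ → ℝ := fun r => ⟪gradψ (θ + r • u), u⟫ - ⟪gradψ θ, u⟫ - l / 2 * ‖u‖ ^ 2 * (2 * r)
    with hφ'def
  set φ : ℝ → ℝ := fun r => ψ (θ + r • u) - r * ⟪gradψ θ, u⟫ - l / 2 * ‖u‖ ^ 2 * r ^ 2 with hφdef
  have hφ' : ∀ r : ℝ, HasDerivAt φ (φ' r) r := by
    intro r
    have h1 : HasDerivAt (fun r : ℝ => r * ⟪gradψ θ, u⟫) ⟪gradψ θ, u⟫ r := by
      simpa using (hasDerivAt_id r).mul_const (⟪gradψ θ, u⟫)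
    have h2 : HasDerivAt (fun r : ℝ => l / 2 * ‖u‖ ^ 2 * r ^ 2)
        (l / 2 * ‖u‖ ^ 2 * (2 * r)) r := by
      simpa using (hasDerivAt_pow 2 r).const_mul (l / 2 * ‖u‖ ^ 2)
    exact ((hψ' r).sub h1).sub h2
  have hφ'' : ∀ r : ℝ, HasDerivAt φ' (⟪hessψ (θ + r • u) u, u⟫ - l * ‖u‖ ^ 2) r := by
    intro r
    have h1 : HasDerivAt (fun r : ℝ => ⟪gradψ (θ + r • u), u⟫)
        (⟪hessψ (θ + r • u) u, u⟫) r := by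
      simpa using HasDerivAt.inner ℝ (hg' r) (hasDerivAt_const r u)
    have h2 : HasDerivAt (fun r : ℝ => l / 2 * ‖u‖ ^ 2 * (2 * r)) (l * ‖u‖ ^ 2) r := by
      have h := ((hasDerivAt_id r).const_mul (2 : ℝ)).const_mul (l / 2 * ‖u‖ ^ 2)
      exact (((hasDerivAt_id' r).const_mul (2 : ℝ)).const_mul (l / 2 * ‖u‖ ^ 2)).congr_deriv (by ring)
    have h3 : HasDerivAt (fun r : ℝ => ⟪gradψ θ, u⟫) 0 r := hasDerivAt_const r _
    exact ((h1.sub h3).sub h2).congr_deriv (by ring)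
  have hdiffφ' : Differentiable ℝ φ' := fun r => (hφ'' r).differentiableAt
  have hderivnn : ∀ r : ℝ, 0 ≤ deriv φ' r := by
    intro r
    rw [(hφ'' r).deriv]
    have h := hstrong (θ + r • u) u
    have hcomm := real_inner_comm (hessψ (θ + r • u) u) u
    linarith
  have hmonoφ' : Monotone φ' := monotone_of_deriv_nonneg hdiffφ' hderivnn
  have hφ'0 : φ' 0 = 0 := by simp [hφ'def]
  have hφ'nn : ∀ r : ℝ, 0 ≤ r → 0 ≤ φ' r := fun r hr => hφ'0 ▸ hmonoφ' hr
  have hmonoφ : MonotoneOn φ (Ici (0:ℝ)) := by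
    refine monotoneOn_of_deriv_nonneg (convex_Ici 0)
      (fun r _ => (hφ' r).differentiableAt.continuousAt.continuousWithinAt)
      (fun r _ => (hφ' r).differentiableAt.differentiableWithinAt) ?_
    intro r hr
    rw [(hφ' r).deriv]
    exact hφ'nn r (le_of_lt (by simpa using hr))
  have h01 : φ 0 ≤ φ 1 := hmonoφ (by simp) (by norm_num) (by norm_num)
  have hy : θ + u = y := by rw [hu]; abel
  simp only [hφdef, zero_smul, add_zero, one_smul, hy, zero_pow, one_pow, zero_mul, one_mul,
    mul_zero, sub_zero] at h01
  linarith

lemma my_quad_ineq {P K l S ip I Y2 E2 : ℝ}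
    (hB : l * E2 ≤ I)
    (hCS : ip ^ 2 ≤ Y2 * E2)
    (hK : 0 ≤ K)
    (hkeyq : Y2 * E2 ≤ P * (K * l) * E2)
    (hP : 0 < P) :
    2 * S * ip - K * I ≤ P * S ^ 2 := by
  have h4 := mul_le_mul_of_nonneg_left (mul_le_mul_of_nonneg_left hB hK) hP.le
  have hsq := sq_nonneg (P * S - ip)
  have hmul : 0 ≤ P * (P * S ^ 2 - 2 * (S * ip) + K * I) := by
    linarith [hsq, hCS, hkeyq, h4]
  nlinarith [hmul, hP]

/-- natural momentum adaptation law for linearly parameterized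
dynamics, with an `l`-strongly convex potential `ψ`.  The law
`v̂̇ = -γ [∇²ψ(v̂)]⁻¹ Yᵀ s` is expressed as `∇²ψ(v̂) v̂̇ = -γ s Y`. -/
theorem natural_momentum_adaptation_linear
    {n p : ℕ}
    (x xd : ℝ → EuclideanSpace ℝ (Fin n))
    (s : ℝ → ℝ)
    (Y : ℝ → EuclideanSpace ℝ (Fin p))
    (a : EuclideanSpace ℝ (Fin p))
    (ahat vhat : ℝ → EuclideanSpace ℝ (Fin p))
    (ψ : EuclideanSpace ℝ (Fin p) → ℝ)
    (gradψ : EuclideanSpace ℝ (Fin p) → EuclideanSpace ℝ (Fin p))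
    (hessψ : EuclideanSpace ℝ (Fin p) →
      (EuclideanSpace ℝ (Fin p) →L[ℝ] EuclideanSpace ℝ (Fin p)))
    (η γ β μ l : ℝ)
    (hη : 0 < η) (hγ : 0 < γ) (hβ : 0 < β) (hl : 0 < l)
    (hμ : γ * (1 + l⁻¹) ^ 2 / (4 * β * η) < μ)
    -- ψ is twice continuously differentiable with gradient gradψ and Hessian hessψ
    (hgrad : ∀ θ, HasGradientAt ψ (gradψ θ) θ)
    (hhess : ∀ θ, HasFDerivAt gradψ (hessψ θ) θ)
    (hhesscont : Continuous hessψ)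
    -- ψ is l-strongly convex: ∇²ψ ⪰ l I globally
    (hstrong : ∀ θ v : EuclideanSpace ℝ (Fin p), l * ‖v‖ ^ 2 ≤ ⟪v, hessψ θ v⟫)
    -- error dynamics ṡ = -η s + Y (â - a)
    (hs : ∀ t, 0 ≤ t → HasDerivAt s (-η * s t + ⟪Y t, ahat t - a⟫) t)
    -- natural momentum adaptation law v̂̇ = -γ [∇²ψ(v̂)]⁻¹ Yᵀ s
    (hv : ∀ t, 0 ≤ t → ∃ dv : EuclideanSpace ℝ (Fin p),
      HasDerivAt vhat dv t ∧ hessψ (vhat t) dv = -((γ * s t) • Y t))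
    -- â̇ = β 𝒩(t)(v̂ - â), 𝒩(t) = 1 + μ‖Y(t)‖²
    (ha : ∀ t, 0 ≤ t →
      HasDerivAt ahat ((β * (1 + μ * ‖Y t‖ ^ 2)) • (vhat t - ahat t)) t)
    -- the regressor Y(x, t) is locally bounded in x uniformly in t
    (hYloc : ∀ R : ℝ, ∃ M : ℝ, ∀ t, 0 ≤ t → ‖x t‖ ≤ R → ‖Y t‖ ≤ M)
    -- boundedness of s implies boundedness of x
    (hsx : InLinf s → InLinf x)
    -- s → 0 implies x → x_d
    (hxd : Tendsto s atTop (nhds 0) →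
      Tendsto (fun t => x t - xd t) atTop (nhds 0)) :
    InLinf x ∧ InLinf vhat ∧ InLinf ahat ∧
    (InL2 s ∧ InLinf s) ∧
    Tendsto s atTop (nhds 0) ∧
    Tendsto (fun t => x t - xd t) atTop (nhds 0) := by
  -- the Lyapunov function and its derivative
  set V : ℝ → ℝ := fun t => (1/2) * s t ^ 2 + γ⁻¹ *
    ((ψ a - ψ (vhat t) - ⟪gradψ (vhat t), a - vhat t⟫) +
     (ψ (ahat t) - ψ (vhat t) - ⟪gradψ (vhat t), ahat t - vhat t⟫)) with hVdef
  set V' : ℝ → ℝ := fun t => -η * s t ^ 2 + 2 * s t * ⟪Y t, ahat t - vhat t⟫ -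
    (β * (1 + μ * ‖Y t‖ ^ 2) / γ) * ⟪gradψ (ahat t) - gradψ (vhat t), ahat t - vhat t⟫
    with hV'def
  have hV' : ∀ t : ℝ, 0 ≤ t → HasDerivAt V (V' t) t := by
    intro t ht
    obtain ⟨dv, hdv, hhdv⟩ := hv t ht
    set da : EuclideanSpace ℝ (Fin p) := (β * (1 + μ * ‖Y t‖ ^ 2)) • (vhat t - ahat t)
      with hdadef
    have hda : HasDerivAt ahat da t := ha t ht
    have h1 : HasDerivAt (fun t => (1/2) * s t ^ 2)
        ((1/2) * (2 * s t * (-η * s t + ⟪Y t, ahat t - a⟫))) t := by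
      simpa [mul_comm, mul_assoc, mul_left_comm] using ((hs t ht).pow 2).const_mul (1/2 : ℝ)
    have h2 : HasDerivAt (fun t => ψ (vhat t)) ⟪gradψ (vhat t), dv⟫ t := by
      have h := (hgrad (vhat t)).hasFDerivAt.comp_hasDerivAt t hdv; simp at h; exact h
    have h3 : HasDerivAt (fun t => ψ (ahat t)) ⟪gradψ (ahat t), da⟫ t := by
      have h := (hgrad (ahat t)).hasFDerivAt.comp_hasDerivAt t hda; simp at h; exact h
    have h4 : HasDerivAt (fun t => gradψ (vhat t)) (hessψ (vhat t) dv) t :=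
      (hhess (vhat t)).comp_hasDerivAt t hdv
    have h5 : HasDerivAt (fun t => (⟪gradψ (vhat t), a - vhat t⟫ : ℝ))
        (⟪gradψ (vhat t), 0 - dv⟫ + ⟪hessψ (vhat t) dv, a - vhat t⟫) t :=
      HasDerivAt.inner ℝ h4 ((hasDerivAt_const t a).sub hdv)
    have h6 : HasDerivAt (fun t => (⟪gradψ (vhat t), ahat t - vhat t⟫ : ℝ))
        (⟪gradψ (vhat t), da - dv⟫ + ⟪hessψ (vhat t) dv, ahat t - vhat t⟫) t :=
      HasDerivAt.inner ℝ h4 (hda.sub hdv)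
    have hbig : HasDerivAt V
        ((1/2) * (2 * s t * (-η * s t + ⟪Y t, ahat t - a⟫)) + γ⁻¹ *
          (((0 - ⟪gradψ (vhat t), dv⟫) -
            (⟪gradψ (vhat t), 0 - dv⟫ + ⟪hessψ (vhat t) dv, a - vhat t⟫)) +
           ((⟪gradψ (ahat t), da⟫ - ⟪gradψ (vhat t), dv⟫) -
            (⟪gradψ (vhat t), da - dv⟫ + ⟪hessψ (vhat t) dv, ahat t - vhat t⟫)))) t := by
      exact h1.add ((((((hasDerivAt_const t (ψ a)).sub h2).sub h5).add
        ((h3.sub h2).sub h6))).const_mul γ⁻¹)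
    convert hbig using 1
    rw [hV'def, hhdv, hdadef]
    simp only [inner_sub_left, inner_sub_right, inner_neg_left, real_inner_smul_left,
      real_inner_smul_right, inner_zero_left, inner_zero_right]
    field_simp
    ring
  -- constants
  have hμ4 : γ * (1 + l⁻¹) ^ 2 < μ * (4 * β * η) := by
    rwa [div_lt_iff₀ (by positivity)] at hμ
  have hll : l * l⁻¹ = 1 := mul_inv_cancel₀ hl.ne'
  have hlinv : 0 < l⁻¹ := inv_pos.2 hl
  have h2l : 2 ≤ l + l⁻¹ := by nlinarith [mul_nonneg (sq_nonneg (l - 1)) hlinv.le, hll]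
  have hlm : l * (1 + l⁻¹) ^ 2 = l + 2 + l⁻¹ := by field_simp; ring
  have hγβ : γ < β * η * l * μ := by nlinarith [mul_pos hγ hl, mul_pos hβ hη]
  have hμpos : 0 < μ := by nlinarith [mul_pos (mul_pos hβ hη) hl]
  set c : ℝ := η - γ / (β * l * μ) with hcdef
  have hc : 0 < c := by
    rw [hcdef, sub_pos, div_lt_iff₀ (by positivity)]; nlinarith
  have hηc : η - c = γ / (β * l * μ) := by rw [hcdef]; ring
  have hkey : ∀ q : ℝ, 0 ≤ q → q ≤ (η - c) * (β * (1 + μ * q) * l / γ) := by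
    intro q hq
    rw [hηc]
    have heq : γ / (β * l * μ) * (β * (1 + μ * q) * l / γ) = 1 / μ + q := by
      field_simp
    rw [heq]
    have : 0 < 1 / μ := by positivity
    linarith
  -- the derivative inequality V' ≤ -c s²
  have hV'le : ∀ t : ℝ, 0 ≤ t → V' t ≤ -c * s t ^ 2 := by
    intro t ht
    simp only [hV'def]
    set e : EuclideanSpace ℝ (Fin p) := ahat t - vhat t with hedef
    have h1 := my_bregman_ge hgrad hhess hstrong (ahat t) (vhat t)
    have h2 := my_bregman_ge hgrad hhess hstrong (vhat t) (ahat t)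
    rw [← neg_sub (ahat t) (vhat t)] at h2
    rw [norm_neg, inner_neg_right] at h2
    have hB : l * ‖e‖ ^ 2 ≤ ⟪gradψ (ahat t) - gradψ (vhat t), e⟫ := by
      rw [inner_sub_left]
      simp only [← hedef] at h1 h2
      linarith
    have hCS : ⟪Y t, e⟫ ^ 2 ≤ ‖Y t‖ ^ 2 * ‖e‖ ^ 2 := by
      have h := abs_real_inner_le_norm (Y t) e
      calc ⟪Y t, e⟫ ^ 2 = |⟪Y t, e⟫| ^ 2 := (sq_abs _).symm
      _ ≤ (‖Y t‖ * ‖e‖) ^ 2 := by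
          apply pow_le_pow_left₀ (abs_nonneg _) h
      _ = ‖Y t‖ ^ 2 * ‖e‖ ^ 2 := by ring
    have hK : 0 < β * (1 + μ * ‖Y t‖ ^ 2) / γ := by positivity
    have hkeyq := hkey (‖Y t‖ ^ 2) (sq_nonneg _)
    have hkeyq' := mul_le_mul_of_nonneg_right hkeyq (sq_nonneg ‖e‖)
    have hkeyq2 : ‖Y t‖ ^ 2 * ‖e‖ ^ 2 ≤
        (η - c) * ((β * (1 + μ * ‖Y t‖ ^ 2) / γ) * l) * ‖e‖ ^ 2 := by
      have heq : (η - c) * ((β * (1 + μ * ‖Y t‖ ^ 2) / γ) * l) * ‖e‖ ^ 2 =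
          (η - c) * (β * (1 + μ * ‖Y t‖ ^ 2) * l / γ) * ‖e‖ ^ 2 := by ring
      rw [heq]; exact hkeyq'
    have hP : 0 < η - c := by rw [hηc]; positivity
    have hmain := my_quad_ineq (S := s t) hB hCS hK.le hkeyq2 hP
    linarith [hmain]
  -- continuity and integrability facts for s²
  have hscont : ∀ t : ℝ, 0 ≤ t → ContinuousAt s t := fun t ht => (hs t ht).continuousAt
  have hf2contOn : ContinuousOn (fun u => s u ^ 2) (Set.Ici (0:ℝ)) := fun t ht =>
    ((hscont t ht).pow 2).continuousWithinAt
  have hf2contOnIoi : ContinuousOn (fun u => s u ^ 2) (Set.Ioi (0:ℝ)) :=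
    hf2contOn.mono Set.Ioi_subset_Ici_self
  have hII : ∀ t₁ t₂ : ℝ, 0 ≤ t₁ → 0 ≤ t₂ →
      IntervalIntegrable (fun u => s u ^ 2) volume t₁ t₂ := by
    intro t₁ t₂ h1 h2
    refine (hf2contOn.mono ?_).intervalIntegrable
    exact fun z hz => le_trans (le_min h1 h2) hz.1
  set G : ℝ → ℝ := fun T => ∫ u in (0:ℝ)..T, s u ^ 2 with hGdef
  have hG' : ∀ t : ℝ, 0 < t → HasDerivAt G (s t ^ 2) t := fun t ht =>
    intervalIntegral.integral_hasDerivAt_right (hII 0 t le_rfl ht.le)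
      (hf2contOnIoi.stronglyMeasurableAtFilter isOpen_Ioi t ht)
      ((hscont t ht.le).pow 2)
  set M : ℝ → ℝ := fun t => V t + c * G t with hMdef
  have hM' : ∀ t : ℝ, 0 < t → HasDerivAt M (V' t + c * s t ^ 2) t := fun t ht =>
    (hV' t ht.le).add ((hG' t ht).const_mul c)
  have hManti : ∀ ε : ℝ, 0 < ε → AntitoneOn M (Set.Ici ε) := by
    intro ε hε
    apply antitoneOn_of_deriv_nonpos (convex_Ici ε)
    · intro t ht
      exact (hM' t (lt_of_lt_of_le hε ht)).continuousAt.continuousWithinAt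
    · intro t ht
      rw [interior_Ici] at ht
      exact (hM' t (hε.trans ht)).differentiableAt.differentiableWithinAt
    · intro t ht
      rw [interior_Ici] at ht
      rw [(hM' t (hε.trans ht)).deriv]
      have := hV'le t (hε.trans ht).le
      linarith
  have hGnonneg : ∀ t : ℝ, 0 ≤ t → 0 ≤ G t := fun t ht =>
    intervalIntegral.integral_nonneg ht (fun u _ => sq_nonneg _)
  clear_value V V' G M c
  -- G is small near 0⁺
  obtain ⟨C₁, hC₁⟩ : ∃ C₁ : ℝ, ∀ u ∈ Set.Icc (0:ℝ) 1, s u ^ 2 ≤ C₁ := by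
    obtain ⟨C₁, hC₁⟩ := (isCompact_Icc (a := (0:ℝ)) (b := 1)).exists_bound_of_continuousOn
      (hf2contOn.mono Set.Icc_subset_Ici_self)
    exact ⟨C₁, fun u hu => le_trans (le_abs_self _)
      (by simpa [Real.norm_eq_abs] using hC₁ u hu)⟩
  have hGtend : Tendsto G (nhdsWithin 0 (Set.Ioi 0)) (nhds 0) := by
    apply squeeze_zero_norm' (a := fun ε => max C₁ 0 * |ε|)
    · filter_upwards [Ioc_mem_nhdsGT_of_mem
        (Set.mem_Ico.2 ⟨le_rfl, zero_lt_one⟩)] with ε hε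
      have hb : ∀ u ∈ Set.uIoc (0:ℝ) ε, ‖s u ^ 2‖ ≤ max C₁ 0 := by
        intro u hu
        rw [Set.uIoc_of_le hε.1.le] at hu
        have hu' : u ∈ Set.Icc (0:ℝ) 1 := ⟨hu.1.le, hu.2.trans hε.2⟩
        rw [Real.norm_eq_abs, abs_of_nonneg (sq_nonneg _)]
        exact le_trans (hC₁ u hu') (le_max_left _ _)
      have := intervalIntegral.norm_integral_le_of_norm_le_const (f := fun u => s u ^ 2) (a := (0:ℝ)) (b := ε) hb
      simpa [hGdef] using this
    · have h : Tendsto (fun ε : ℝ => max C₁ 0 * |ε|) (nhds 0) (nhds (max C₁ 0 * |(0:ℝ)|)) :=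
        (continuous_const.mul continuous_abs).tendsto 0
      simp only [abs_zero, mul_zero] at h
      exact h.mono_left nhdsWithin_le_nhds
  have hVcont0 : ContinuousAt V 0 := (hV' 0 le_rfl).continuousAt
  -- the main Lyapunov bound
  have hMbound : ∀ t : ℝ, 0 ≤ t → V t + c * G t ≤ V 0 := by
    intro t ht
    rcases eq_or_lt_of_le ht with h0 | h0
    · rw [← h0]
      simp [hGdef, intervalIntegral.integral_same]
    · have hev : ∀ᶠ ε in nhdsWithin 0 (Set.Ioi 0), V t + c * G t ≤ V ε + c * G ε := by
        filter_upwards [Ioo_mem_nhdsGT_of_mem (Set.mem_Ico.2 ⟨le_rfl, h0⟩)] with ε hε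
        have h := hManti ε hε.1 Set.self_mem_Ici (Set.mem_Ici.2 hε.2.le) hε.2.le
        simpa [hMdef] using h
      have htend : Tendsto (fun ε => V ε + c * G ε) (nhdsWithin 0 (Set.Ioi 0))
          (nhds (V 0 + c * 0)) :=
        ((hVcont0.tendsto.mono_left nhdsWithin_le_nhds).add (tendsto_const_nhds.mul hGtend))
      have := ge_of_tendsto htend hev
      simpa using this
  -- nonnegativity of the Bregman terms
  have hd1 : ∀ t : ℝ, 0 ≤ ψ a - ψ (vhat t) - ⟪gradψ (vhat t), a - vhat t⟫ := fun t =>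
    le_trans (by positivity) (my_bregman_ge hgrad hhess hstrong a (vhat t))
  have hd2 : ∀ t : ℝ, 0 ≤ ψ (ahat t) - ψ (vhat t) - ⟪gradψ (vhat t), ahat t - vhat t⟫ :=
    fun t => le_trans (by positivity) (my_bregman_ge hgrad hhess hstrong (ahat t) (vhat t))
  have hγinv : 0 < γ⁻¹ := inv_pos.2 hγ
  have hVnonneg : ∀ t : ℝ, 0 ≤ V t := by
    intro t
    have h := mul_nonneg hγinv.le (add_nonneg (hd1 t) (hd2 t))
    simp only [hVdef]
    nlinarith [sq_nonneg (s t)]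
  have hVle : ∀ t : ℝ, 0 ≤ t → V t ≤ V 0 := by
    intro t ht
    have h1 := hMbound t ht
    have h2 := hGnonneg t ht
    nlinarith [hc]
  have hGle : ∀ t : ℝ, 0 ≤ t → G t ≤ V 0 / c := by
    intro t ht
    rw [le_div_iff₀ hc]
    have h1 := hMbound t ht
    have h2 := hVnonneg t
    nlinarith
  -- boundedness of s
  have hsbound : ∀ t : ℝ, 0 ≤ t → |s t| ≤ Real.sqrt (2 * V 0) := by
    intro t ht
    have h1 : (1:ℝ)/2 * s t ^ 2 ≤ V t := by
      have h := mul_nonneg hγinv.le (add_nonneg (hd1 t) (hd2 t))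
      simp only [hVdef]
      linarith
    have h2 : s t ^ 2 ≤ 2 * V 0 := by
      have := hVle t ht
      linarith
    calc |s t| = Real.sqrt (s t ^ 2) := by rw [Real.sqrt_sq_eq_abs]
    _ ≤ Real.sqrt (2 * V 0) := Real.sqrt_le_sqrt h2
  have hInLinf_s : InLinf s := ⟨Real.sqrt (2 * V 0), fun t ht => by
    rw [Real.norm_eq_abs]; exact hsbound t ht⟩
  have hInLinf_x : InLinf x := hsx hInLinf_s
  -- boundedness of vhat and ahat
  have hvdist : ∀ t : ℝ, 0 ≤ t → ‖a - vhat t‖ ≤ Real.sqrt (2 * γ * V 0 / l) := by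
    intro t ht
    have hb := my_bregman_ge hgrad hhess hstrong a (vhat t)
    have hVt := hVle t ht
    have hVteq : V t = 1/2 * s t ^ 2 + γ⁻¹ *
        ((ψ a - ψ (vhat t) - ⟪gradψ (vhat t), a - vhat t⟫) +
         (ψ (ahat t) - ψ (vhat t) - ⟪gradψ (vhat t), ahat t - vhat t⟫)) := by
      rw [hVdef]
    have h1 : γ⁻¹ * (l / 2 * ‖a - vhat t‖ ^ 2) ≤ V 0 := by
      linarith [mul_le_mul_of_nonneg_left hb hγinv.le,
        mul_le_mul_of_nonneg_left (hd2 t) hγinv.le, hVt, hVteq, sq_nonneg (s t)]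
    have h2 : ‖a - vhat t‖ ^ 2 ≤ 2 * γ * V 0 / l := by
      rw [le_div_iff₀ hl]
      have h3 := mul_le_mul_of_nonneg_left h1 hγ.le
      rw [← mul_assoc, mul_inv_cancel₀ hγ.ne', one_mul] at h3
      nlinarith
    calc ‖a - vhat t‖ = Real.sqrt (‖a - vhat t‖ ^ 2) := by
          rw [Real.sqrt_sq (norm_nonneg _)]
    _ ≤ _ := Real.sqrt_le_sqrt h2
  have havdist : ∀ t : ℝ, 0 ≤ t → ‖ahat t - vhat t‖ ≤ Real.sqrt (2 * γ * V 0 / l) := by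
    intro t ht
    have hb := my_bregman_ge hgrad hhess hstrong (ahat t) (vhat t)
    have hVt := hVle t ht
    have hVteq : V t = 1/2 * s t ^ 2 + γ⁻¹ *
        ((ψ a - ψ (vhat t) - ⟪gradψ (vhat t), a - vhat t⟫) +
         (ψ (ahat t) - ψ (vhat t) - ⟪gradψ (vhat t), ahat t - vhat t⟫)) := by
      rw [hVdef]
    have h1 : γ⁻¹ * (l / 2 * ‖ahat t - vhat t‖ ^ 2) ≤ V 0 := by
      linarith [mul_le_mul_of_nonneg_left hb hγinv.le,
        mul_le_mul_of_nonneg_left (hd1 t) hγinv.le, hVt, hVteq, sq_nonneg (s t)]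
    have h2 : ‖ahat t - vhat t‖ ^ 2 ≤ 2 * γ * V 0 / l := by
      rw [le_div_iff₀ hl]
      have h3 := mul_le_mul_of_nonneg_left h1 hγ.le
      rw [← mul_assoc, mul_inv_cancel₀ hγ.ne', one_mul] at h3
      nlinarith
    calc ‖ahat t - vhat t‖ = Real.sqrt (‖ahat t - vhat t‖ ^ 2) := by
          rw [Real.sqrt_sq (norm_nonneg _)]
    _ ≤ _ := Real.sqrt_le_sqrt h2
  have hInLinf_v : InLinf vhat := by
    refine ⟨‖a‖ + Real.sqrt (2 * γ * V 0 / l), fun t ht => ?_⟩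
    calc ‖vhat t‖ = ‖a - (a - vhat t)‖ := by rw [sub_sub_cancel]
    _ ≤ ‖a‖ + ‖a - vhat t‖ := norm_sub_le _ _
    _ ≤ ‖a‖ + Real.sqrt (2 * γ * V 0 / l) := by linarith [hvdist t ht]
  have hInLinf_a : InLinf ahat := by
    obtain ⟨Cv, hCv⟩ := hInLinf_v
    refine ⟨Cv + Real.sqrt (2 * γ * V 0 / l), fun t ht => ?_⟩
    calc ‖ahat t‖ = ‖vhat t + (ahat t - vhat t)‖ := by rw [add_sub_cancel]
    _ ≤ ‖vhat t‖ + ‖ahat t - vhat t‖ := norm_add_le _ _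
    _ ≤ Cv + Real.sqrt (2 * γ * V 0 / l) := add_le_add (hCv t ht) (havdist t ht)
  -- s ∈ L²
  have hGle' : ∀ T : ℝ, 0 ≤ T → (∫ u in (0:ℝ)..T, s u ^ 2) ≤ V 0 / c := by
    intro T hT
    have h := hGle T hT
    rw [hGdef] at h
    exact h
  have hIoi : IntegrableOn (fun u => s u ^ 2) (Set.Ioi (0:ℝ)) volume := by
    apply MeasureTheory.integrableOn_Ioi_of_intervalIntegral_norm_bounded (V 0 / c) 0
      (b := fun n : ℕ => (n : ℝ)) (l := atTop) ?_ tendsto_natCast_atTop_atTop ?_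
    · intro i
      exact (hII 0 i le_rfl (Nat.cast_nonneg i)).1
    · filter_upwards with (i : ℕ)
      have hnorm : ∀ u : ℝ, ‖s u ^ 2‖ = s u ^ 2 := fun u => by
        rw [Real.norm_eq_abs, abs_of_nonneg (sq_nonneg _)]
      simp only [hnorm]
      exact hGle' i (Nat.cast_nonneg i)
  have hInL2_s : InL2 s := by
    rw [InL2]
    have hae : ∫⁻ t in Set.Ici (0:ℝ), ENNReal.ofReal (‖s t‖ ^ 2) =
        ∫⁻ t in Set.Ioi (0:ℝ), ENNReal.ofReal (‖s t‖ ^ 2) :=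
      (MeasureTheory.setLIntegral_congr (Filter.EventuallyEq.symm Ioi_ae_eq_Ici))
    rw [hae]
    have hfin := hIoi.2
    rw [MeasureTheory.hasFiniteIntegral_iff_norm] at hfin
    calc ∫⁻ t in Set.Ioi (0:ℝ), ENNReal.ofReal (‖s t‖ ^ 2)
        = ∫⁻ t in Set.Ioi (0:ℝ), ENNReal.ofReal ‖s t ^ 2‖ := by
          apply lintegral_congr
          intro t
          rw [Real.norm_eq_abs, Real.norm_eq_abs, sq_abs, abs_of_nonneg (sq_nonneg _)]
    _ < ⊤ := hfin
  -- s(t) → 0 via Barbalat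
  obtain ⟨Rx, hRx⟩ := id hInLinf_x
  obtain ⟨MY, hMY⟩ := hYloc Rx
  have hYb : ∀ t : ℝ, 0 ≤ t → ‖Y t‖ ≤ MY := fun t ht => hMY t ht (hRx t ht)
  obtain ⟨Ca, hCa⟩ := id hInLinf_a
  set L : ℝ := η * Real.sqrt (2 * V 0) + max MY 0 * (max Ca 0 + ‖a‖) with hLdef
  have hdbound : ∀ z ∈ Set.Ici (0:ℝ), ‖-η * s z + ⟪Y z, ahat z - a⟫‖ ≤ L := by
    intro z hz
    rw [Set.mem_Ici] at hz
    have h1 : |(-η) * s z| ≤ η * Real.sqrt (2 * V 0) := by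
      rw [abs_mul, abs_neg, abs_of_nonneg hη.le]
      exact mul_le_mul_of_nonneg_left (hsbound z hz) hη.le
    have h2 : |⟪Y z, ahat z - a⟫| ≤ max MY 0 * (max Ca 0 + ‖a‖) := by
      calc |⟪Y z, ahat z - a⟫| ≤ ‖Y z‖ * ‖ahat z - a‖ := abs_real_inner_le_norm _ _
      _ ≤ max MY 0 * (max Ca 0 + ‖a‖) := by
          apply mul_le_mul ((hYb z hz).trans (le_max_left _ _))
          · calc ‖ahat z - a‖ ≤ ‖ahat z‖ + ‖a‖ := norm_sub_le _ _
            _ ≤ max Ca 0 + ‖a‖ := by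
                have := hCa z hz
                have := le_max_left Ca (0:ℝ)
                linarith
          · exact norm_nonneg _
          · exact le_max_right _ _
    calc ‖-η * s z + ⟪Y z, ahat z - a⟫‖ ≤ |(-η) * s z| + |⟪Y z, ahat z - a⟫| :=
        norm_add_le _ _
    _ ≤ L := by rw [hLdef]; linarith
  have hlip : ∀ t u : ℝ, 0 ≤ t → 0 ≤ u → |s t - s u| ≤ L * |t - u| := by
    intro t u ht hu
    have := Convex.norm_image_sub_le_of_norm_hasDerivWithin_le
      (f := s) (f' := fun z => -η * s z + ⟪Y z, ahat z - a⟫) (s := Set.Ici (0:ℝ))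
      (fun z hz => (hs z (Set.mem_Ici.1 hz)).hasDerivWithinAt) hdbound
      (convex_Ici 0) (Set.mem_Ici.2 hu) (Set.mem_Ici.2 ht)
    simpa [Real.norm_eq_abs] using this
  have htends : Tendsto s atTop (nhds 0) := my_barbalat hscont hlip hGle'
  exact ⟨hInLinf_x, hInLinf_v, hInLinf_a, ⟨hInL2_s, hInLinf_s⟩, htends, hxd htends⟩
end
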